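/- Let A be a differentiable function on an interval [0,T) with A(0⁺) → 1 (i.e. lim_{s→0⁺} A(s) = 1), A(s)² ≤ 1, and suppose A satisfies the differential inequality A'(s) ≥ m(s)(1 − A(s)² − εK) where m(s) > 0 and εK < 1. Then for any C̄ > K/2 with 2C̄ − K > εC̄², one has A(s) ≥ 1 − εC̄ for all s ∈ (0,T). -/
import Mathlib


open MeasureTheory

/-- Differential-inequality comparison: if `A' ≥ m(s)(1 − A² − εK)` on `(0,T)` with
`A(0⁺) = 1`, `A² ≤ 1`, `m > 0` locally integrable and non-integrable at `0`, then for any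
`C̄ > K/2` with `2C̄ − K > εC̄²` one has `A(s) ≥ 1 − εC̄` on `(0,T)`. -/
theorem stmt_18 (T : EReal) (hT : 0 < T) (ε K : ℝ) (hε : 0 < ε) (hK : 0 < K)
    (hεK : ε * K < 1) (m A A' : ℝ → ℝ)
    (hm : ∀ s : ℝ, 0 < s → (s : EReal) < T → 0 < m s)
    (hmint : ∀ s₁ s₂ : ℝ, 0 < s₁ → s₁ ≤ s₂ → (s₂ : EReal) < T →
      IntervalIntegrable m volume s₁ s₂)
    (hmdiv : ∀ δ : ℝ, 0 < δ → (δ : EReal) ≤ T →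
      ∫⁻ s in Set.Ioo (0:ℝ) δ, ENNReal.ofReal (m s) = ⊤)
    (hA : ∀ s : ℝ, 0 < s → (s : EReal) < T → A s ∈ Set.Icc (-1 : ℝ) 1)
    (hAd : ∀ s : ℝ, 0 < s → (s : EReal) < T → HasDerivAt A (A' s) s)
    (hineq : ∀ s : ℝ, 0 < s → (s : EReal) < T →
      m s * (1 - A s ^ 2 - ε * K) ≤ A' s)
    (hlim : Filter.Tendsto A (nhdsWithin 0 (Set.Ioi 0)) (nhds 1)) :
    ∀ Cb : ℝ, K / 2 < Cb → ε * Cb ^ 2 < 2 * Cb - K →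
      ∀ s : ℝ, 0 < s → (s : EReal) < T → 1 - ε * Cb ≤ A s := by

  intro Cb hCb1 hCb2 s₀ hs₀ hs₀T
  by_contra hcon
  push_neg at hcon
  have hCb0 : 0 < Cb := lt_trans (by linarith) hCb1
  set b : ℝ := 1 - ε * Cb with hbdef
  have hb2 : b ^ 2 < 1 - ε * K := by
    have h := mul_pos hε (sub_pos.mpr hCb2)
    rw [hbdef]; nlinarith
  have h1εK : 0 < 1 - ε * K := by nlinarith [sq_nonneg b]
  set r : ℝ := Real.sqrt (1 - ε * K) with hrdef
  have hr0 : 0 < r := Real.sqrt_pos.mpr h1εK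
  have hr2 : r ^ 2 = 1 - ε * K := Real.sq_sqrt h1εK.le
  have hbr : b < r := by nlinarith [sq_nonneg (b - r), sq_nonneg (b + r)]
  have hnrb : -r < b := by nlinarith [sq_nonneg (b - r), sq_nonneg (b + r)]
  set v : ℝ := (max (A s₀) (-r) + b) / 2 with hvdef
  have hmaxb : max (A s₀) (-r) < b := max_lt hcon hnrb
  have hvb : v < b := by rw [hvdef]; linarith
  have hAv : A s₀ < v := by
    have h := le_max_left (A s₀) (-r); rw [hvdef]; linarith
  have hrv : -r < v := by
    have h := le_max_right (A s₀) (-r); rw [hvdef]; linarith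
  have hv2 : v ^ 2 < 1 - ε * K := by nlinarith
  have hv1 : v < 1 := by nlinarith [mul_pos hε hCb0]
  have hev : ∀ᶠ s in nhdsWithin 0 (Set.Ioi 0), v < A s ∧ s ∈ Set.Ioo (0:ℝ) s₀ := by
    filter_upwards [hlim.eventually (eventually_gt_nhds hv1),
      Ioo_mem_nhdsGT_of_mem (Set.left_mem_Ico.mpr hs₀)] with s h1 h2
    exact ⟨h1, h2⟩
  obtain ⟨s', hs'A, hs'0, hs's₀⟩ := hev.exists
  have hcoemono : ∀ x y : ℝ, x ≤ y → (x : EReal) ≤ (y : EReal) := fun x y h =>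
    EReal.coe_le_coe_iff.mpr h
  have hcont : ContinuousOn A (Set.Icc s' s₀) := fun x hx =>
    ((hAd x (lt_of_lt_of_le hs'0 hx.1)
      (lt_of_le_of_lt (hcoemono x s₀ hx.2) hs₀T)).continuousAt).continuousWithinAt
  set S : Set ℝ := Set.Icc s' s₀ ∩ A ⁻¹' Set.Ici v with hSdef
  have hSclosed : IsClosed S :=
    hcont.preimage_isClosed_of_isClosed isClosed_Icc isClosed_Ici
  have hScomp : IsCompact S := isCompact_Icc.of_isClosed_subset hSclosed
    Set.inter_subset_left
  have hSne : S.Nonempty := ⟨s', ⟨Set.left_mem_Icc.mpr hs's₀.le, hs'A.le⟩⟩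
  set s₂ : ℝ := sSup S with hs₂def
  have hs₂S : s₂ ∈ S := hScomp.sSup_mem hSne
  obtain ⟨⟨hs's₂, hs₂s₀⟩, hvA₂'⟩ := hs₂S
  have hvA₂ : v ≤ A s₂ := hvA₂'
  have hs₂0 : 0 < s₂ := lt_of_lt_of_le hs'0 hs's₂
  have hs₂T : (s₂ : EReal) < T := lt_of_le_of_lt (hcoemono s₂ s₀ hs₂s₀) hs₀T
  have hs₂lt : s₂ < s₀ := by
    rcases lt_or_eq_of_le hs₂s₀ with h | h
    · exact h
    · exact absurd (h ▸ hvA₂) (not_le.mpr hAv)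
  have hafter : ∀ s, s ∈ Set.Ioc s₂ s₀ → A s < v := by
    intro s hs
    by_contra hge
    push_neg at hge
    have hmem : s ∈ S := ⟨⟨le_trans hs's₂ hs.1.le, hs.2⟩, hge⟩
    exact absurd (le_csSup hScomp.bddAbove hmem) (not_le.mpr hs.1)
  have hconts₂ : ContinuousAt A s₂ := (hAd s₂ hs₂0 hs₂T).continuousAt
  have hle : A s₂ ≤ v := by
    have htd : Filter.Tendsto A (nhdsWithin s₂ (Set.Ioi s₂)) (nhds (A s₂)) :=
      hconts₂.tendsto.mono_left nhdsWithin_le_nhds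
    refine le_of_tendsto htd ?_
    filter_upwards [Ioc_mem_nhdsGT_of_mem (Set.left_mem_Ico.mpr hs₂lt)] with s hs
    exact (hafter s hs).le
  have hA₂ : A s₂ = v := le_antisymm hle hvA₂
  have hds₂ := hAd s₂ hs₂0 hs₂T
  have hpos : 0 < A' s₂ := by
    refine lt_of_lt_of_le ?_ (hineq s₂ hs₂0 hs₂T)
    have h2 : 0 < 1 - A s₂ ^ 2 - ε * K := by rw [hA₂]; linarith
    exact mul_pos (hm s₂ hs₂0 hs₂T) h2
  have hslope := hasDerivAt_iff_tendsto_slope.mp hds₂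
  have hev2 : ∀ᶠ s in nhdsWithin s₂ (Set.Ioi s₂), 0 < slope A s₂ s :=
    Filter.Eventually.filter_mono
      (nhdsWithin_mono s₂ (fun x hx => Set.mem_compl_singleton_iff.mpr (ne_of_gt hx)))
      (hslope.eventually (eventually_gt_nhds hpos))
  have hev3 : ∀ᶠ s in nhdsWithin s₂ (Set.Ioi s₂),
      0 < slope A s₂ s ∧ s ∈ Set.Ioc s₂ s₀ := by
    filter_upwards [hev2, Ioc_mem_nhdsGT_of_mem (Set.left_mem_Ico.mpr hs₂lt)]
      with s h1 h2
    exact ⟨h1, h2⟩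
  obtain ⟨s, hsl, hsIoc⟩ := hev3.exists
  rw [slope_def_field] at hsl
  have hd : 0 < s - s₂ := sub_pos.mpr hsIoc.1
  have hnum : 0 < A s - A s₂ := by
    rcases div_pos_iff.mp hsl with ⟨h1, _⟩ | ⟨_, h2⟩
    · exact h1
    · linarith
  have := hafter s hsIoc
  rw [hA₂] at hnum
  linarith
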